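/- arXiv:1108.2995 — 2 statements merged into one kernel-verified Lean document; each statement's English description precedes it below -/
import Mathlib

section
/- Let h : C → C be a chain self-map of an R-module chain complex, and T(h) its algebraic mapping torus. Then the induced map h_* : T(h) → T(h) is chain homotopic to the multiplication-by-x map; in particular h_* is a quasi-isomorphism. -/
open CategoryTheory LaurentPolynomial

/-- Degreewise scalar multiplication by `a` as a chain self-map. -/
def smulChainMap {A : Type*} [CommRing A] {ι : Type*} {c : ComplexShape ι} (a : A)
    (K : HomologicalComplex (ModuleCat A) c) : K ⟶ K where
  f n := ModuleCat.ofHom (a • LinearMap.id)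
  comm' := by
    intro i j _
    ext x
    show (K.d i j).hom (a • x) = a • (K.d i j).hom x
    exact (K.d i j).hom.map_smul a x


lemma smulChainMap_eq {A : Type*} [CommRing A] {ι : Type*} {c : ComplexShape ι} (a : A)
    (K : HomologicalComplex (ModuleCat A) c) : smulChainMap a K = a • 𝟙 K := by
  ext n x
  simp [smulChainMap]

open CochainComplex.HomComplex in
lemma ofHom_smul' {A : Type*} [CommRing A] {K L : CochainComplex (ModuleCat A) ℤ}
    (a : A) (f : K ⟶ L) : CochainComplex.HomComplex.Cochain.ofHom (a • f) =
      a • CochainComplex.HomComplex.Cochain.ofHom f := by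
  ext p
  simp

open CochainComplex CochainComplex.HomComplex CochainComplex.mappingCone in
theorem stmt5_aux (R : Type*) [CommRing R]
    (X : CochainComplex (ModuleCat (LaurentPolynomial R)) ℤ)
    (h' : X ⟶ X) (w : X ⟶ X) (hw : w = h' - smulChainMap (T 1) X)
    (comm : w ≫ h' = h' ≫ w) :
    Nonempty (Homotopy (mappingCone.map w w h' h' comm) (smulChainMap (T 1) (mappingCone w))) ∧
    QuasiIso (mappingCone.map w w h' h' comm) := by
  rw [smulChainMap_eq] at hw
  have H : Homotopy (mappingCone.map w w h' h' comm) (smulChainMap (T 1) (mappingCone w)) := by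
    rw [smulChainMap_eq]
    refine descHomotopy w _ _ 0 (inl w) ?_ ?_
    · simp [mappingCone.map, inl_desc, hw, ofHom_smul', Cochain.sub_comp, Cochain.smul_comp,
        Cochain.comp_smul, Cochain.id_comp, Cochain.comp_id, Cochain.ofHom_sub]
    · simp [mappingCone.map, hw, ofHom_smul', Cochain.ofHom_sub, Preadditive.sub_comp,
        Linear.smul_comp, Cochain.ofHom_comp]
  have hiso : IsIso (smulChainMap (T 1) (mappingCone w)) := by
    rw [smulChainMap_eq]
    obtain ⟨u, hu⟩ := isUnit_T (R := R) 1
    rw [← hu]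
    exact ⟨(u⁻¹ : (LaurentPolynomial R)ˣ) • 𝟙 _,
      by simp [smul_smul, Units.smul_def], by simp [smul_smul, Units.smul_def]⟩
  refine ⟨⟨H⟩, ?_⟩
  rw [quasiIso_iff]
  intro i
  rw [quasiIsoAt_iff_isIso_homologyMap, H.homologyMap_eq,
    ← quasiIsoAt_iff_isIso_homologyMap]
  infer_instance

/-- For a chain self-map `h : C → C` of an `R`-module chain complex,
the induced self-map `h_*` of the algebraic mapping torus
`T(h) = Cone(h⊗1 − 1⊗x : C ⊗_R R[x,x⁻¹] → C ⊗_R R[x,x⁻¹])` is chain homotopic to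
multiplication by `x`; in particular `h_*` is a quasi-isomorphism. -/
theorem stmt5 (R : Type*) [CommRing R] (C : CochainComplex (ModuleCat R) ℤ) (h : C ⟶ C) :
    ∀ w : ((ModuleCat.extendScalars
          (algebraMap R (LaurentPolynomial R))).mapHomologicalComplex
            (ComplexShape.up ℤ)).obj C ⟶
        ((ModuleCat.extendScalars
          (algebraMap R (LaurentPolynomial R))).mapHomologicalComplex
            (ComplexShape.up ℤ)).obj C,
      w = ((ModuleCat.extendScalars
            (algebraMap R (LaurentPolynomial R))).mapHomologicalComplex
              (ComplexShape.up ℤ)).map h - smulChainMap (T 1) _ →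
      ∀ comm : w ≫ ((ModuleCat.extendScalars
            (algebraMap R (LaurentPolynomial R))).mapHomologicalComplex
              (ComplexShape.up ℤ)).map h =
          ((ModuleCat.extendScalars
            (algebraMap R (LaurentPolynomial R))).mapHomologicalComplex
              (ComplexShape.up ℤ)).map h ≫ w,
        Nonempty (Homotopy
          (CochainComplex.mappingCone.map w w
            (((ModuleCat.extendScalars
              (algebraMap R (LaurentPolynomial R))).mapHomologicalComplex
                (ComplexShape.up ℤ)).map h)
            (((ModuleCat.extendScalars
              (algebraMap R (LaurentPolynomial R))).mapHomologicalComplex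
                (ComplexShape.up ℤ)).map h) comm)
          (smulChainMap (T 1) (CochainComplex.mappingCone w))) ∧
        QuasiIso (CochainComplex.mappingCone.map w w
            (((ModuleCat.extendScalars
              (algebraMap R (LaurentPolynomial R))).mapHomologicalComplex
                (ComplexShape.up ℤ)).map h)
            (((ModuleCat.extendScalars
              (algebraMap R (LaurentPolynomial R))).mapHomologicalComplex
                (ComplexShape.up ℤ)).map h) comm) := by
  intro w hw comm
  exact stmt5_aux R _ _ w hw comm
end

section
/- If C is a chain complex of A-modules that is R-finitely dominated (R a subring of A) and h : C → C is any self chain map, then the algebraic mapping torus T(h) is R[x,x⁻¹]-finitely dominated; moreover if C is homotopy equivalent over R to a strict R-perfect complex D via f : C → D, g : D → C, then T(h) is homotopy equivalent to the strict R[x,x⁻¹]-perfect complex T(f∘h∘g). -/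
open CategoryTheory LaurentPolynomial

/-- The algebraic mapping torus `T(h) = Cone(h⊗1 − 1⊗x : C ⊗_R R[x,x⁻¹] → C ⊗_R R[x,x⁻¹])`
of a self-map `h` of a complex of `R`-modules. -/
noncomputable def mappingTorus {R : Type*} [CommRing R] {C : CochainComplex (ModuleCat R) ℤ}
    (h : C ⟶ C) : CochainComplex (ModuleCat (LaurentPolynomial R)) ℤ :=
  CochainComplex.mappingCone
    (((ModuleCat.extendScalars (algebraMap R (LaurentPolynomial R))).mapHomologicalComplex
        (ComplexShape.up ℤ)).map h - smulChainMap (T 1) _)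

open TensorProduct in
section
instance ModuleCat.extendScalars_additive {R S : Type} [CommRing R] [CommRing S] (f : R →+* S) :
    (ModuleCat.extendScalars f).Additive where
  map_add {M N g h} := by
    refine ModuleCat.hom_ext (LinearMap.ext fun x => ?_)
    induction x using TensorProduct.induction_on with
    | zero => exact (map_zero _).trans (map_zero _).symm
    | tmul s m =>
        erw [ModuleCat.ExtendScalars.map_tmul]
        rw [ModuleCat.hom_add]
        erw [LinearMap.add_apply]
        exact (TensorProduct.tmul_add s (g m) (h m)).trans rfl
    | add x y hx hy =>
        erw [map_add, hx, hy]
        exact (map_add _ x y).symm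


section Aux
variable {R S : Type*} [CommRing R] [CommRing S] [Algebra R S]

/-- identity as a linear equiv undoing restriction of scalars on `S` itself. -/
noncomputable def restrictSelfEquiv :
    ((ModuleCat.restrictScalars (algebraMap R S)).obj (ModuleCat.of S S)) ≃ₗ[R] S :=
  AddEquiv.toLinearEquiv (AddEquiv.refl S) (by
    intro r x
    exact (Algebra.smul_def r ((AddEquiv.refl S) x)).symm)

noncomputable def extendScalarsEquiv (M : ModuleCat R) :
    ((ModuleCat.extendScalars (algebraMap R S)).obj M) ≃ₗ[S] S ⊗[R] M :=
  AddEquiv.toLinearEquiv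
    (TensorProduct.congr (restrictSelfEquiv (R := R) (S := S)) (LinearEquiv.refl R M)).toAddEquiv
    (by
      intro s x
      induction x using TensorProduct.induction_on with
      | zero =>
          show _ = s • (0 : S ⊗[R] M)
          rw [smul_zero]
          exact map_zero _
      | tmul s' m =>
          erw [ModuleCat.ExtendScalars.smul_tmul]
          exact (TensorProduct.smul_tmul' (R := R) (M := S) (N := M) s s' m).symm
      | add x y hx hy =>
          erw [smul_add, map_add, hx, hy, map_add, smul_add])

lemma extScalars_finite (M : ModuleCat R) [Module.Finite R M] :
    Module.Finite S ((ModuleCat.extendScalars (algebraMap R S)).obj M) :=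
  Module.Finite.equiv (extendScalarsEquiv M).symm

lemma extScalars_projective (M : ModuleCat R) [Module.Projective R M] :
    Module.Projective S ((ModuleCat.extendScalars (algebraMap R S)).obj M) :=
  Module.Projective.of_equiv (extendScalarsEquiv (S := S) M).symm

lemma tensor_subsingleton (M : ModuleCat R) [Subsingleton M] :
    Subsingleton (S ⊗[R] (M : Type _)) := by
  refine subsingleton_of_forall_eq 0 fun x => ?_
  induction x using TensorProduct.induction_on with
  | zero => rfl
  | tmul s m => rw [Subsingleton.elim m 0, tmul_zero]
  | add x y hx hy => rw [hx, hy, add_zero]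

lemma extScalars_subsingleton (M : ModuleCat R) [Subsingleton M] :
    Subsingleton ((ModuleCat.extendScalars (algebraMap R S)).obj M) :=
  have := tensor_subsingleton (S := S) M
  (extendScalarsEquiv (S := S) M).toEquiv.subsingleton

end Aux

section Cone

variable {S : Type} [CommRing S]

lemma smulChainMap_comm (a : S) {K L : CochainComplex (ModuleCat S) ℤ} (ψ : K ⟶ L) :
    smulChainMap a K ≫ ψ = ψ ≫ smulChainMap a L := by
  ext n x
  show (ψ.f n).hom (a • x) = a • (ψ.f n).hom x
  exact (ψ.f n).hom.map_smul a x

/-- Mather's trick at the level of mapping cones: a square commuting up to homotopy with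
homotopy equivalences as vertical maps induces a homotopy equivalence of mapping cones. -/
noncomputable def coneHomotopyEquiv {K₁ L₁ K₂ L₂ : CochainComplex (ModuleCat S) ℤ}
    (φ₁ : K₁ ⟶ L₁) (φ₂ : K₂ ⟶ L₂) (e₁ : HomotopyEquiv K₁ K₂) (e₂ : HomotopyEquiv L₁ L₂)
    (H : Homotopy (φ₁ ≫ e₂.hom) (e₁.hom ≫ φ₂)) :
    HomotopyEquiv (CochainComplex.mappingCone φ₁) (CochainComplex.mappingCone φ₂) :=
  HomotopyCategory.homotopyEquivOfIso
    (Pretriangulated.Triangle.π₃.mapIso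
      (Pretriangulated.isoTriangleOfIso₁₂ _ _
        (HomotopyCategory.mappingCone_triangleh_distinguished φ₁)
        (HomotopyCategory.mappingCone_triangleh_distinguished φ₂)
        (HomotopyCategory.isoOfHomotopyEquiv e₁)
        (HomotopyCategory.isoOfHomotopyEquiv e₂)
        (by
          dsimp [HomotopyCategory.isoOfHomotopyEquiv]
          change (HomotopyCategory.quotient _ _).map φ₁ ≫ _ = _ ≫ (HomotopyCategory.quotient _ _).map φ₂
          refine ((Functor.map_comp _ _ _).symm.trans ?_).trans (Functor.map_comp _ _ _)
          exact HomotopyCategory.eq_of_homotopy _ _ H)))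

end Cone

section Torus

variable {R : Type} [CommRing R]

/-- Short names for the base-change functors. -/
noncomputable abbrev FL (R : Type) [CommRing R] :=
  ModuleCat.extendScalars (algebraMap R (LaurentPolynomial R))

noncomputable abbrev EL (R : Type) [CommRing R] :=
  (FL R).mapHomologicalComplex (ComplexShape.up ℤ)

/-- The mapping torus is natural up to homotopy equivalence. -/
noncomputable def torusHomotopyEquiv {C₁ C₂ : CochainComplex (ModuleCat R) ℤ}
    (h₁ : C₁ ⟶ C₁) (h₂ : C₂ ⟶ C₂) (e : HomotopyEquiv C₁ C₂)
    (H : Homotopy (h₁ ≫ e.hom) (e.hom ≫ h₂)) :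
    HomotopyEquiv (mappingTorus h₁) (mappingTorus h₂) := by
  refine coneHomotopyEquiv _ _ ((FL R).mapHomotopyEquiv e) ((FL R).mapHomotopyEquiv e) ?_
  have key : Homotopy
      (((EL R).map h₁ - smulChainMap (T 1) ((EL R).obj C₁)) ≫ (EL R).map e.hom)
      ((EL R).map e.hom ≫ ((EL R).map h₂ - smulChainMap (T 1) ((EL R).obj C₂))) :=
    (Homotopy.ofEq (by
        rw [Preadditive.sub_comp, ← Functor.map_comp, sub_eq_add_neg])).trans
      (((((FL R).mapHomotopy H).add (Homotopy.refl
          (-(smulChainMap (T 1) ((EL R).obj C₁) ≫ (EL R).map e.hom)))).trans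
        (Homotopy.ofEq (by
          rw [Preadditive.comp_sub, ← Functor.map_comp, ← smulChainMap_comm,
            sub_eq_add_neg]))))
  exact key

end Torus

section TorusX

variable {R : Type} [CommRing R] {D : CochainComplex (ModuleCat R) ℤ}

noncomputable def torusXEquiv (ψ : D ⟶ D) (n : ℤ) :
    ((mappingTorus ψ).X n) ≃ₗ[LaurentPolynomial R]
      ((((EL R).obj D).X (n + 1)) × (((EL R).obj D).X n)) :=
  ((HomologicalComplex.homotopyCofiber.XIsoBiprod
      ((EL R).map ψ - smulChainMap (T 1) ((EL R).obj D)) n (n + 1) (by simp)) ≪≫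
    ModuleCat.biprodIsoProd _ _).toLinearEquiv

lemma torusX_subsingleton (ψ : D ⟶ D) (n : ℤ)
    (h1 : Subsingleton (D.X (n + 1))) (h2 : Subsingleton (D.X n)) :
    Subsingleton ((mappingTorus ψ).X n) := by
  haveI : Subsingleton (((EL R).obj D).X (n + 1)) := extScalars_subsingleton (D.X (n + 1))
  haveI : Subsingleton (((EL R).obj D).X n) := extScalars_subsingleton (D.X n)
  exact (torusXEquiv ψ n).toEquiv.subsingleton

lemma torusX_finite (ψ : D ⟶ D) (n : ℤ)
    (h1 : Module.Finite R (D.X (n + 1))) (h2 : Module.Finite R (D.X n)) :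
    Module.Finite (LaurentPolynomial R) ((mappingTorus ψ).X n) := by
  haveI : Module.Finite (LaurentPolynomial R) (((EL R).obj D).X (n + 1)) :=
    extScalars_finite (D.X (n + 1))
  haveI : Module.Finite (LaurentPolynomial R) (((EL R).obj D).X n) :=
    extScalars_finite (D.X n)
  exact Module.Finite.equiv (torusXEquiv ψ n).symm

lemma torusX_projective (ψ : D ⟶ D) (n : ℤ)
    (h1 : Module.Projective R (D.X (n + 1))) (h2 : Module.Projective R (D.X n)) :
    Module.Projective (LaurentPolynomial R) ((mappingTorus ψ).X n) := by
  haveI : Module.Projective (LaurentPolynomial R) (((EL R).obj D).X (n + 1)) :=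
    extScalars_projective (D.X (n + 1))
  haveI : Module.Projective (LaurentPolynomial R) (((EL R).obj D).X n) :=
    extScalars_projective (D.X n)
  exact Module.Projective.of_equiv (torusXEquiv ψ n).symm

end TorusX
end

/-- If `C` is a complex of `A`-modules which is `R`-finitely dominated
(`R → A`), witnessed by a homotopy equivalence `e` over `R` with a strict `R`-perfect
complex `D`, and `h : C → C` is any self chain map, then the mapping torus `T(h)` is
`R[x,x⁻¹]`-finitely dominated; moreover `T(h)` is homotopy equivalent to the strict
`R[x,x⁻¹]`-perfect complex `T(e.inv ≫ h ≫ e.hom)`. -/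
theorem stmt9 (R A : Type) [CommRing R] [CommRing A] [Algebra R A]
    (C : CochainComplex (ModuleCat A) ℤ) (h : C ⟶ C)
    (D : CochainComplex (ModuleCat R) ℤ)
    (a b : ℤ) (hbd : ∀ n, n < a ∨ b < n → Subsingleton (D.X n))
    (hfg : ∀ n, Module.Finite R (D.X n)) (hproj : ∀ n, Module.Projective R (D.X n))
    (e : HomotopyEquiv
      (((ModuleCat.restrictScalars (algebraMap R A)).mapHomologicalComplex
        (ComplexShape.up ℤ)).obj C) D) :
    -- `T(f ∘ h ∘ g)` is strict `R[x,x⁻¹]`-perfect …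
    ((∃ a' b' : ℤ, ∀ n, n < a' ∨ b' < n →
        Subsingleton ((mappingTorus (e.inv ≫
          ((ModuleCat.restrictScalars (algebraMap R A)).mapHomologicalComplex
            (ComplexShape.up ℤ)).map h ≫ e.hom)).X n)) ∧
      (∀ n, Module.Finite (LaurentPolynomial R)
        ((mappingTorus (e.inv ≫
          ((ModuleCat.restrictScalars (algebraMap R A)).mapHomologicalComplex
            (ComplexShape.up ℤ)).map h ≫ e.hom)).X n)) ∧
      (∀ n, Module.Projective (LaurentPolynomial R)
        ((mappingTorus (e.inv ≫
          ((ModuleCat.restrictScalars (algebraMap R A)).mapHomologicalComplex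
            (ComplexShape.up ℤ)).map h ≫ e.hom)).X n))) ∧
    -- … and `T(h)` is homotopy equivalent to it; in particular `T(h)` is
    -- `R[x,x⁻¹]`-finitely dominated.
    Nonempty (HomotopyEquiv
      (mappingTorus (R := R) (((ModuleCat.restrictScalars (algebraMap R A)).mapHomologicalComplex
        (ComplexShape.up ℤ)).map h))
      (mappingTorus (e.inv ≫
        ((ModuleCat.restrictScalars (algebraMap R A)).mapHomologicalComplex
          (ComplexShape.up ℤ)).map h ≫ e.hom))) := by
  constructor
  · refine ⟨⟨a - 1, b, fun n hn => ?_⟩, fun n => ?_, fun n => ?_⟩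
    · exact torusX_subsingleton _ n
        (hbd (n + 1) (by omega)) (hbd n (by omega))
    · exact torusX_finite _ n (hfg (n + 1)) (hfg n)
    · exact torusX_projective _ n (hproj (n + 1)) (hproj n)
  · refine ⟨torusHomotopyEquiv _ _ e ?_⟩
    exact (Homotopy.ofEq (Category.id_comp _).symm).trans
      ((e.homotopyHomInvId.symm.compRight _).trans
        (Homotopy.ofEq (by simp)))
end
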